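/- Let M be a Möbius structure, and q=(a,b), q'=(a,b') harmonic pairs with common axis a=(x,y), b=(z,u), b'=(z',u'). Then the distance |qq'| = |ln( (|xz'||yz|)/(|xz||yz'|) )| is independent of the choice of semi-metric from M, and by harmonicity equals |ln((|xu'||yu|)/(|xu||yu'|))| = |ln((|xu'||yz|)/(|xz||yu'|))| = |ln((|xz'||yu|)/(|xu||yz'|))|. -/

import Mathlib

/-- A Möbius structure on a set `X`, presented by the family of its semi-metrics with
infinitely remote points: `D ω x y` is `|xy|` in the semi-metric with infinitely remote
point `ω` (defined for `x, y ≠ ω`); the semi-metrics are pairwise related by metric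
inversion up to homothety (hence are Möbius equivalent). -/
structure MobiusFamily (X : Type*) where
  D : X → X → X → ℝ
  symm : ∀ ω x y, D ω x y = D ω y x
  refl : ∀ ω x, D ω x x = 0
  pos : ∀ ω x y, x ≠ y → x ≠ ω → y ≠ ω → 0 < D ω x y
  inversion : ∀ ω ω', ω ≠ ω' → ∃ c : ℝ, 0 < c ∧ ∀ x y, x ≠ ω → y ≠ ω → x ≠ ω' → y ≠ ω' →
    D ω' x y = c * D ω x y / (D ω x ω' * D ω y ω')

/-- The 4-tuple `(x,y,z,u)` is harmonic: `|xz||yu| = |xu||yz|` in any semi-metric of the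
Möbius structure. -/
def MobiusFamily.Harmonic {X : Type*} (F : MobiusFamily X) (x y z u : X) : Prop :=
  ∀ ω, ω ≠ x → ω ≠ y → ω ≠ z → ω ≠ u →
    F.D ω x z * F.D ω y u = F.D ω x u * F.D ω y z

/-- Let `M` be a Möbius structure, and `q = (a,b)`, `q' = (a,b')` harmonic
pairs with common axis `a = (x,y)`, `b = (z,u)`, `b' = (z',u')`. Then the distance
`|qq'| = |ln((|xz'||yz|)/(|xz||yz'|))|` is independent of the choice of semi-metric from `M`,
and by harmonicity equals `|ln((|xu'||yu|)/(|xu||yu'|))| = |ln((|xu'||yz|)/(|xz||yu'|))|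
= |ln((|xz'||yu|)/(|xu||yz'|))|`. -/
theorem stmt12 {X : Type*} (F : MobiusFamily X) (x y z u z' u' : X)
    (hxy : x ≠ y) (hxz : x ≠ z) (hxu : x ≠ u) (hyz : y ≠ z) (hyu : y ≠ u) (hzu : z ≠ u)
    (hxz' : x ≠ z') (hxu' : x ≠ u') (hyz' : y ≠ z') (hyu' : y ≠ u') (hzu' : z' ≠ u')
    (hq : F.Harmonic x y z u) (hq' : F.Harmonic x y z' u') :
    ∀ ω ω' : X,
      ω ≠ x → ω ≠ y → ω ≠ z → ω ≠ u → ω ≠ z' → ω ≠ u' →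
      ω' ≠ x → ω' ≠ y → ω' ≠ z → ω' ≠ u → ω' ≠ z' → ω' ≠ u' →
      -- independence of the semi-metric:
      |Real.log (F.D ω x z' * F.D ω y z / (F.D ω x z * F.D ω y z'))| =
        |Real.log (F.D ω' x z' * F.D ω' y z / (F.D ω' x z * F.D ω' y z'))| ∧
      -- the equalities (eq:distance_different):
      |Real.log (F.D ω x z' * F.D ω y z / (F.D ω x z * F.D ω y z'))| =
        |Real.log (F.D ω x u' * F.D ω y u / (F.D ω x u * F.D ω y u'))| ∧
      |Real.log (F.D ω x z' * F.D ω y z / (F.D ω x z * F.D ω y z'))| =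
        |Real.log (F.D ω x u' * F.D ω y z / (F.D ω x z * F.D ω y u'))| ∧
      |Real.log (F.D ω x z' * F.D ω y z / (F.D ω x z * F.D ω y z'))| =
        |Real.log (F.D ω x z' * F.D ω y u / (F.D ω x u * F.D ω y z'))| := by
  intro ω ω' h1 h2 h3 h4 h5 h6 g1 g2 g3 g4 g5 g6
  have pxz := F.pos ω x z hxz (Ne.symm h1) (Ne.symm h3)
  have pxu := F.pos ω x u hxu (Ne.symm h1) (Ne.symm h4)
  have pyz := F.pos ω y z hyz (Ne.symm h2) (Ne.symm h3)
  have pyu := F.pos ω y u hyu (Ne.symm h2) (Ne.symm h4)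
  have pxz' := F.pos ω x z' hxz' (Ne.symm h1) (Ne.symm h5)
  have pxu' := F.pos ω x u' hxu' (Ne.symm h1) (Ne.symm h6)
  have pyz' := F.pos ω y z' hyz' (Ne.symm h2) (Ne.symm h5)
  have pyu' := F.pos ω y u' hyu' (Ne.symm h2) (Ne.symm h6)
  have H1 := hq ω h1 h2 h3 h4
  have H2 := hq' ω h1 h2 h5 h6
  refine ⟨?_, ?_, ?_, ?_⟩
  · rcases eq_or_ne ω ω' with rfl | hne
    · rfl
    · obtain ⟨c, hc, hinv⟩ := F.inversion ω ω' hne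
      have px := F.pos ω x ω' (Ne.symm g1) (Ne.symm h1) (Ne.symm hne)
      have py := F.pos ω y ω' (Ne.symm g2) (Ne.symm h2) (Ne.symm hne)
      have pz := F.pos ω z ω' (Ne.symm g3) (Ne.symm h3) (Ne.symm hne)
      have pz2 := F.pos ω z' ω' (Ne.symm g5) (Ne.symm h5) (Ne.symm hne)
      rw [hinv x z' (Ne.symm h1) (Ne.symm h5) (Ne.symm g1) (Ne.symm g5),
        hinv y z (Ne.symm h2) (Ne.symm h3) (Ne.symm g2) (Ne.symm g3),
        hinv x z (Ne.symm h1) (Ne.symm h3) (Ne.symm g1) (Ne.symm g3),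
        hinv y z' (Ne.symm h2) (Ne.symm h5) (Ne.symm g2) (Ne.symm g5)]
      congr 2
      field_simp
  · congr 2
    rw [div_eq_div_iff (by positivity) (by positivity)]
    linear_combination F.D ω y z * F.D ω x u * H2 - F.D ω x u' * F.D ω y z' * H1
  · congr 2
    rw [div_eq_div_iff (by positivity) (by positivity)]
    linear_combination F.D ω y z * F.D ω x z * H2
  · congr 2
    rw [div_eq_div_iff (by positivity) (by positivity)]
    linear_combination - (F.D ω x z' * F.D ω y z' * H1)
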